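/- arXiv:1606.04056 — 2 statements merged into one kernel-verified Lean document; each statement's English description precedes it below -/
import Mathlib

section
/- Let f = hom(-, H(α,β)) for a weighted graph H on q vertices with real vertex weights α and edge weights β. For every k ≥ 0, the k-connection matrix C(f,k) has rank at most q^k; more precisely, every row of C(f,k) is a real linear combination of at most q^k fixed vectors. -/
/-- A `k`-labeled graph: a finite graph (possibly with multiple edges, recorded by the
symmetric, loop-free edge multiplicity function `E`) together with an injective labeling
of `k` of its vertices by labels from `[k]`. -/
structure KGraph (k : ℕ) where
  V : Type
  [fin : Fintype V]
  E : V → V → ℕ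
  symmE : ∀ a b, E a b = E b a
  loopfree : ∀ a, E a a = 0
  lab : Fin k → V
  inj : Function.Injective lab

namespace KGraph

variable {k : ℕ}

/-- The vertex set of the `k`-connection of `A` and `B`: all vertices of `A` together
with the unlabeled vertices of `B` (the labeled vertices of `B` get identified with
the equally-labeled vertices of `A`). -/
abbrev GlueV (A B : KGraph k) : Type :=
  A.V ⊕ {b : B.V // ∀ i, b ≠ B.lab i}

open Classical in
/-- The canonical map from the vertices of `B` into the `k`-connection of `A` and `B`. -/
noncomputable def emb₂ (A B : KGraph k) (b : B.V) : GlueV A B :=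
  if h : ∃ i, B.lab i = b then Sum.inl (A.lab (Classical.choose h))
  else Sum.inr ⟨b, fun i hb => h ⟨i, hb.symm⟩⟩

lemma emb₂_inj (A B : KGraph k) : Function.Injective (emb₂ A B) := by
  intro b b' h
  by_cases h1 : ∃ i, B.lab i = b <;> by_cases h2 : ∃ i, B.lab i = b'
  · unfold emb₂ at h
    rw [dif_pos h1, dif_pos h2] at h
    have := A.inj (Sum.inl.inj h)
    rw [← Classical.choose_spec h1, ← Classical.choose_spec h2, this]
  · unfold emb₂ at h
    rw [dif_pos h1, dif_neg h2] at h
    exact absurd h (by simp)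
  · unfold emb₂ at h
    rw [dif_neg h1, dif_pos h2] at h
    exact absurd h (by simp)
  · unfold emb₂ at h
    rw [dif_neg h1, dif_neg h2] at h
    exact congrArg Subtype.val (Sum.inr.inj h)

open Classical in
/-- The edge multiplicity function of the `k`-connection of `A` and `B`:
multiplicities coming from `A` and from `B` add up. -/
noncomputable def glueE (A B : KGraph k) (x y : GlueV A B) : ℕ :=
  letI := B.fin
  (match x, y with
    | Sum.inl a, Sum.inl a' => A.E a a'
    | _, _ => 0)
  + ∑ b : B.V, ∑ b' : B.V,
      if emb₂ A B b = x ∧ emb₂ A B b' = y then B.E b b' else 0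

lemma glueE_symm (A B : KGraph k) (x y : GlueV A B) : glueE A B x y = glueE A B y x := by
  classical
  letI := B.fin
  unfold glueE
  refine congrArg₂ (· + ·) ?_ ?_
  · rcases x with a | a <;> rcases y with a' | a' <;> simp [A.symmE]
  · rw [Finset.sum_comm]
    refine Finset.sum_congr rfl fun b _ => Finset.sum_congr rfl fun b' _ => ?_
    exact if_congr and_comm (B.symmE b' b) rfl

lemma glueE_loopfree (A B : KGraph k) (x : GlueV A B) : glueE A B x x = 0 := by
  classical
  letI := B.fin
  unfold glueE
  have h1 : (match x, x with
    | Sum.inl a, Sum.inl a' => A.E a a'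
    | _, _ => 0) = 0 := by
    rcases x with a | a <;> simp [A.loopfree]
  rw [h1]
  refine Nat.zero_add _ ▸ Finset.sum_eq_zero fun b _ => Finset.sum_eq_zero fun b' _ => ?_
  split_ifs with hb
  · obtain ⟨hb1, hb2⟩ := hb
    have : b = b' := emb₂_inj A B (hb1.trans hb2.symm)
    rw [this, B.loopfree]
  · rfl

/-- The `k`-connection (gluing) of two `k`-labeled graphs: take the disjoint union and
identify equally-labeled vertices. -/
noncomputable def glue (A B : KGraph k) : KGraph k where
  V := GlueV A B
  fin := by
    have := A.fin; have := B.fin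
    classical
    exact inferInstance
  E := glueE A B
  symmE := glueE_symm A B
  loopfree := glueE_loopfree A B
  lab := fun i => Sum.inl (A.lab i)
  inj := fun i j h => A.inj (Sum.inl.inj h)

open Classical in
/-- The partition function `hom(-, H(α,β))` of the weighted graph `H(α,β)` on `q`
vertices with vertex weights `α` and edge weights `β`, evaluated on (the underlying
graph of) a `k`-labeled graph `X`:
`Σ_{t : V(X) → [q]} Π_v α(t v) · Π_{(u,v) ∈ V(X)²} β(t u, t v) ^ E(u,v)`. -/
noncomputable def Z (q : ℕ) (α : Fin q → ℝ) (β : Matrix (Fin q) (Fin q) ℝ)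
    (X : KGraph k) : ℝ :=
  letI := X.fin
  ∑ t : X.V → Fin q,
    (∏ w : X.V, α (t w)) * ∏ p : X.V × X.V, β (t p.1) (t p.2) ^ X.E p.1 p.2

open Classical in
/-- The restricted partition function `hom_φ(X, H(α,β))`: the weighted homomorphism sum
over maps extending `φ` on the labeled vertices. -/
noncomputable def homRestrict (q : ℕ) (α : Fin q → ℝ) (β : Matrix (Fin q) (Fin q) ℝ)
    (X : KGraph k) (φ : Fin k → Fin q) : ℝ :=
  letI := X.fin
  ∑ t : X.V → Fin q,
    if ∀ i, t (X.lab i) = φ i then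
      (∏ w : X.V, α (t w)) * ∏ p : X.V × X.V, β (t p.1) (t p.2) ^ X.E p.1 p.2
    else 0

end KGraph


private lemma univ_inst {gam : Type*} (i1 i2 : Fintype gam) :
    @Finset.univ gam i1 = @Finset.univ gam i2 := by
  cases Subsingleton.elim i1 i2; rfl

private lemma prod_univ_inst {gam : Type*} {M : Type*} [CommMonoid M]
    (i1 i2 : Fintype gam) (f : gam → M) :
    @Finset.prod gam M _ (@Finset.univ gam i1) f
      = @Finset.prod gam M _ (@Finset.univ gam i2) f := by
  cases Subsingleton.elim i1 i2; rfl

private lemma sum_univ_inst {gam : Type*} {M : Type*} [AddCommMonoid M]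
    (i1 i2 : Fintype gam) (f : gam → M) :
    @Finset.sum gam M _ (@Finset.univ gam i1) f
      = @Finset.sum gam M _ (@Finset.univ gam i2) f := by
  cases Subsingleton.elim i1 i2; rfl

namespace KGraph

open Classical in
/-- Extend `s` (defined on unlabeled vertices) by `φ` on labeled vertices. -/
noncomputable def extMap {k : ℕ} (q : ℕ) (B : KGraph k) (φ : Fin k → Fin q)
    (s : {b : B.V // ∀ i, b ≠ B.lab i} → Fin q) : B.V → Fin q :=
  fun b => if h : ∃ i, B.lab i = b then φ (Classical.choose h)
           else s ⟨b, fun i hb => h ⟨i, hb.symm⟩⟩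

open Classical in
noncomputable def vec {k : ℕ} (q : ℕ) (α : Fin q → ℝ) (β : Matrix (Fin q) (Fin q) ℝ)
    (φ : Fin k → Fin q) (B : KGraph k) : ℝ :=
  letI := B.fin
  ∑ s : {b : B.V // ∀ i, b ≠ B.lab i} → Fin q,
    (∏ u : {b : B.V // ∀ i, b ≠ B.lab i}, α (s u)) *
      ∏ p : B.V × B.V, β (extMap q B φ s p.1) (extMap q B φ s p.2) ^ B.E p.1 p.2

lemma elim_emb {k : ℕ} (q : ℕ) (A B : KGraph k) (φ : Fin k → Fin q)
    (t₁ : A.V → Fin q) (s : {b : B.V // ∀ i, b ≠ B.lab i} → Fin q)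
    (ht₁ : ∀ i, t₁ (A.lab i) = φ i) (b : B.V) :
    Sum.elim t₁ s (emb₂ A B b) = extMap q B φ s b := by
  unfold emb₂ extMap
  by_cases h : ∃ i, B.lab i = b
  · rw [dif_pos h, dif_pos h, Sum.elim_inl, ht₁]
  · rw [dif_neg h, dif_neg h, Sum.elim_inr]

end KGraph

/-- Freedman–Lovász–Schrijver: if `f = hom(-, H(α,β))` for a weighted graph `H` on `q`
vertices, then for every `k ≥ 0` the `k`-connection matrix `C(f,k)` has rank at most
`q^k`: every row of `C(f,k)` is a real linear combination of `q^k` fixed vectors,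
indexed by the maps `φ : [k] → V(H)`. -/
theorem connection_matrix_rank_le
    (q k : ℕ) (α : Fin q → ℝ) (β : Matrix (Fin q) (Fin q) ℝ) :
    ∃ vecs : (Fin k → Fin q) → KGraph k → ℝ,
      ∀ G₁ : KGraph k, ∃ c : (Fin k → Fin q) → ℝ,
        ∀ G₂ : KGraph k,
          KGraph.Z q α β (G₁.glue G₂) = ∑ φ : Fin k → Fin q, c φ * vecs φ G₂ := by
  classical
  refine ⟨KGraph.vec q α β, fun A => ⟨KGraph.homRestrict q α β A, fun B => ?_⟩⟩
  letI := A.fin; letI := B.fin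
  set U := {b : B.V // ∀ i, b ≠ B.lab i} with hU
  -- the match in `glueE` as a `Sum.elim`, and the double sum as a sum over pairs
  have hg : ∀ x y : KGraph.GlueV A B, KGraph.glueE A B x y
      = Sum.elim (fun a => Sum.elim (A.E a) (fun _ => 0) y) (fun _ => 0) x
        + ∑ c : B.V × B.V,
            (if KGraph.emb₂ A B c.1 = x ∧ KGraph.emb₂ A B c.2 = y
              then B.E c.1 c.2 else 0) := by
    have hg0 : ∀ (n : ℕ) (x y : KGraph.GlueV A B),
        (n + ∑ b : B.V, ∑ b' : B.V,
            if KGraph.emb₂ A B b = x ∧ KGraph.emb₂ A B b' = y then B.E b b' else 0)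
          = n + ∑ c : B.V × B.V,
              (if KGraph.emb₂ A B c.1 = x ∧ KGraph.emb₂ A B c.2 = y
                then B.E c.1 c.2 else 0) := by
      intro n x y
      rw [Fintype.sum_prod_type]
    rintro (a | u) (a' | u') <;> exact hg0 _ _ _
  -- pointwise factorization of the weight of a gluing
  have key : ∀ t : KGraph.GlueV A B → Fin q,
      (∏ w : KGraph.GlueV A B, α (t w)) *
          ∏ p : KGraph.GlueV A B × KGraph.GlueV A B,
            β (t p.1) (t p.2) ^ KGraph.glueE A B p.1 p.2
        = ((∏ a : A.V, α (t (Sum.inl a))) *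
            ∏ p : A.V × A.V, β (t (Sum.inl p.1)) (t (Sum.inl p.2)) ^ A.E p.1 p.2)
          * ((∏ u : U, α (t (Sum.inr u))) *
              ∏ p : B.V × B.V,
                β (t (KGraph.emb₂ A B p.1)) (t (KGraph.emb₂ A B p.2)) ^ B.E p.1 p.2) := by
    intro t
    have hα : (∏ w : KGraph.GlueV A B, α (t w))
        = (∏ a : A.V, α (t (Sum.inl a))) * ∏ u : U, α (t (Sum.inr u)) :=
      Fintype.prod_sum_type _
    have hβ : (∏ p : KGraph.GlueV A B × KGraph.GlueV A B,
          β (t p.1) (t p.2) ^ KGraph.glueE A B p.1 p.2)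
        = (∏ p : A.V × A.V, β (t (Sum.inl p.1)) (t (Sum.inl p.2)) ^ A.E p.1 p.2)
          * ∏ p : B.V × B.V,
              β (t (KGraph.emb₂ A B p.1)) (t (KGraph.emb₂ A B p.2)) ^ B.E p.1 p.2 := by
      calc (∏ p : KGraph.GlueV A B × KGraph.GlueV A B,
            β (t p.1) (t p.2) ^ KGraph.glueE A B p.1 p.2)
          = (∏ p : KGraph.GlueV A B × KGraph.GlueV A B,
              β (t p.1) (t p.2)
                ^ (Sum.elim (fun a => Sum.elim (A.E a) (fun _ => 0) p.2) (fun _ => 0) p.1))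
            * ∏ p : KGraph.GlueV A B × KGraph.GlueV A B, ∏ c : B.V × B.V,
                β (t p.1) (t p.2)
                  ^ (if KGraph.emb₂ A B c.1 = p.1 ∧ KGraph.emb₂ A B c.2 = p.2
                      then B.E c.1 c.2 else 0) := by
            rw [← Finset.prod_mul_distrib]
            refine Finset.prod_congr rfl fun p _ => ?_
            rw [hg p.1 p.2, pow_add, Finset.prod_pow_eq_pow_sum]
        _ = (∏ p : A.V × A.V, β (t (Sum.inl p.1)) (t (Sum.inl p.2)) ^ A.E p.1 p.2)
            * ∏ p : B.V × B.V,
                β (t (KGraph.emb₂ A B p.1)) (t (KGraph.emb₂ A B p.2)) ^ B.E p.1 p.2 := by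
            congr 1
            · rw [Fintype.prod_prod_type, Fintype.prod_sum_type]
              simp only [Sum.elim_inl, Sum.elim_inr, pow_zero, Finset.prod_const_one, mul_one]
              rw [Fintype.prod_prod_type]
              refine Finset.prod_congr rfl fun a _ => ?_
              rw [Fintype.prod_sum_type]
              simp
            · rw [Finset.prod_comm]
              refine Finset.prod_congr rfl fun c _ => ?_
              have h1 : ∀ p : KGraph.GlueV A B × KGraph.GlueV A B,
                  β (t p.1) (t p.2)
                      ^ (if KGraph.emb₂ A B c.1 = p.1 ∧ KGraph.emb₂ A B c.2 = p.2
                          then B.E c.1 c.2 else 0)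
                    = if (KGraph.emb₂ A B c.1, KGraph.emb₂ A B c.2) = p
                        then β (t p.1) (t p.2) ^ B.E c.1 c.2 else 1 := by
                intro p
                by_cases hp : (KGraph.emb₂ A B c.1, KGraph.emb₂ A B c.2) = p
                · obtain ⟨h1, h2⟩ := Prod.ext_iff.mp hp
                  rw [if_pos ⟨h1, h2⟩, if_pos hp]
                · rw [if_neg (fun hc => hp (Prod.ext_iff.mpr ⟨hc.1, hc.2⟩)),
                    if_neg hp, pow_zero]
              refine Eq.trans (Finset.prod_congr rfl fun p _ => h1 p) ?_
              rw [Finset.prod_ite_eq]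
              simp
    rw [hα, hβ]; ring
  -- unfold Z and reindex the sum over maps on the glued graph
  have hZ : KGraph.Z q α β (A.glue B)
      = ∑ t₁ : A.V → Fin q, ∑ s : U → Fin q,
          ((∏ a : A.V, α (t₁ a)) *
            ∏ p : A.V × A.V, β (t₁ p.1) (t₁ p.2) ^ A.E p.1 p.2)
          * ((∏ u : U, α (s u)) *
              ∏ p : B.V × B.V,
                β (Sum.elim t₁ s (KGraph.emb₂ A B p.1))
                  (Sum.elim t₁ s (KGraph.emb₂ A B p.2)) ^ B.E p.1 p.2) := by
    letI iG : Fintype (KGraph.GlueV A B → Fin q) := inferInstance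
    letI iG' : Fintype ((A.glue B).V → Fin q) := iG
    rw [KGraph.Z]
    refine Eq.trans (sum_univ_inst _ iG' _) ?_
    refine Eq.trans (Finset.sum_congr rfl fun t _ =>
      Eq.trans (congrArg₂ (· * ·)
        (prod_univ_inst _ _ _)
        (prod_univ_inst _
          _ _)) (key t)) ?_
    exact Eq.trans
      (Fintype.sum_equiv (Equiv.sumArrowEquivProdArrow A.V U (Fin q)).symm _ _
        fun pr => rfl).symm
      (Fintype.sum_prod_type _)
  rw [hZ]
  have hinner : ∀ (φ : Fin k → Fin q) (t₁ : A.V → Fin q), (∀ i, t₁ (A.lab i) = φ i) →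
      (∑ s : U → Fin q, ((∏ u : U, α (s u)) * ∏ p : B.V × B.V, β (Sum.elim t₁ s (KGraph.emb₂ A B p.1)) (Sum.elim t₁ s (KGraph.emb₂ A B p.2)) ^ B.E p.1 p.2)) = KGraph.vec q α β φ B := by
    intro φ t₁ ht₁
    rw [KGraph.vec]
    refine Eq.trans (Finset.sum_congr rfl fun s _ => ?_) (sum_univ_inst _ _ _)
    refine congrArg₂ (· * ·) (prod_univ_inst _ _ _) ?_
    refine Eq.trans (Finset.prod_congr rfl fun p _ => ?_) (prod_univ_inst _ _ _)
    rw [KGraph.elim_emb q A B φ t₁ s ht₁, KGraph.elim_emb q A B φ t₁ s ht₁]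
  have hrow : ∀ φ : Fin k → Fin q,
      (∑ t₁ : A.V → Fin q, if (fun i => t₁ (A.lab i)) = φ then ((∏ a : A.V, α (t₁ a)) * ∏ p : A.V × A.V, β (t₁ p.1) (t₁ p.2) ^ A.E p.1 p.2) else 0)
        = KGraph.homRestrict q α β A φ := by
    intro φ
    rw [KGraph.homRestrict]
    exact Eq.trans (Finset.sum_congr rfl fun t₁ _ => if_congr funext_iff rfl rfl)
      (sum_univ_inst _ _ _)
  calc (∑ t₁ : A.V → Fin q, ∑ s : U → Fin q, ((∏ a : A.V, α (t₁ a)) * ∏ p : A.V × A.V, β (t₁ p.1) (t₁ p.2) ^ A.E p.1 p.2) * ((∏ u : U, α (s u)) * ∏ p : B.V × B.V, β (Sum.elim t₁ s (KGraph.emb₂ A B p.1)) (Sum.elim t₁ s (KGraph.emb₂ A B p.2)) ^ B.E p.1 p.2))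
      = ∑ t₁ : A.V → Fin q, ((∏ a : A.V, α (t₁ a)) * ∏ p : A.V × A.V, β (t₁ p.1) (t₁ p.2) ^ A.E p.1 p.2) * (∑ s : U → Fin q, ((∏ u : U, α (s u)) * ∏ p : B.V × B.V, β (Sum.elim t₁ s (KGraph.emb₂ A B p.1)) (Sum.elim t₁ s (KGraph.emb₂ A B p.2)) ^ B.E p.1 p.2)) :=
        Finset.sum_congr rfl fun t₁ _ => (Finset.mul_sum _ _ _).symm
    _ = ∑ t₁ : A.V → Fin q, ∑ φ : Fin k → Fin q,
          (if (fun i => t₁ (A.lab i)) = φ then ((∏ a : A.V, α (t₁ a)) * ∏ p : A.V × A.V, β (t₁ p.1) (t₁ p.2) ^ A.E p.1 p.2) * (∑ s : U → Fin q, ((∏ u : U, α (s u)) * ∏ p : B.V × B.V, β (Sum.elim t₁ s (KGraph.emb₂ A B p.1)) (Sum.elim t₁ s (KGraph.emb₂ A B p.2)) ^ B.E p.1 p.2)) else 0) := by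
        refine Finset.sum_congr rfl fun t₁ _ => ?_
        rw [Finset.sum_ite_eq]
        simp
    _ = ∑ φ : Fin k → Fin q, ∑ t₁ : A.V → Fin q,
          (if (fun i => t₁ (A.lab i)) = φ then ((∏ a : A.V, α (t₁ a)) * ∏ p : A.V × A.V, β (t₁ p.1) (t₁ p.2) ^ A.E p.1 p.2) * (∑ s : U → Fin q, ((∏ u : U, α (s u)) * ∏ p : B.V × B.V, β (Sum.elim t₁ s (KGraph.emb₂ A B p.1)) (Sum.elim t₁ s (KGraph.emb₂ A B p.2)) ^ B.E p.1 p.2)) else 0) := Finset.sum_comm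
    _ = ∑ φ : Fin k → Fin q, ∑ t₁ : A.V → Fin q,
          (if (fun i => t₁ (A.lab i)) = φ then ((∏ a : A.V, α (t₁ a)) * ∏ p : A.V × A.V, β (t₁ p.1) (t₁ p.2) ^ A.E p.1 p.2) else 0) * KGraph.vec q α β φ B := by
        refine Finset.sum_congr rfl fun φ _ => Finset.sum_congr rfl fun t₁ _ => ?_
        by_cases h : (fun i => t₁ (A.lab i)) = φ
        · rw [if_pos h, if_pos h, hinner φ t₁ (fun i => congrFun h i)]
        · rw [if_neg h, if_neg h, zero_mul]
    _ = ∑ φ : Fin k → Fin q,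
          (∑ t₁ : A.V → Fin q, if (fun i => t₁ (A.lab i)) = φ then ((∏ a : A.V, α (t₁ a)) * ∏ p : A.V × A.V, β (t₁ p.1) (t₁ p.2) ^ A.E p.1 p.2) else 0)
            * KGraph.vec q α β φ B := by
        refine Finset.sum_congr rfl fun φ _ => ?_
        rw [Finset.sum_mul]
    _ = ∑ φ : Fin k → Fin q, KGraph.homRestrict q α β A φ * KGraph.vec q α β φ B := by
        refine Finset.sum_congr rfl fun φ _ => ?_
        rw [hrow φ]
end

section
/- For a k-labeled graph G₁ and a weighted graph H(α,β) on vertex set [q], define for each map φ: [k] → [q] the value hom_φ(G₁, H) as the weighted homomorphism sum restricted to maps extending φ on the labeled vertices (with vertex weights of labeled vertices counted once). Then for any two k-labeled graphs G₁, G₂ with fully labeled intersection, hom(G₁G₂, H(α,β)) = Σ_{φ: [k]→[q]} hom_φ(G₁,H) · hom_φ(G₂,H) / Π_{i∈[k]} α(φ(i)), assuming all α values are nonzero. In particular the connection matrix C(hom(-,H(α,β)), k) is a Gram matrix of rank at most q^k. -/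
namespace KGraph

variable {k : ℕ}

lemma emb₂_lab (A B : KGraph k) (i : Fin k) :
    emb₂ A B (B.lab i) = Sum.inl (A.lab i) := by
  have h : ∃ j, B.lab j = B.lab i := ⟨i, rfl⟩
  unfold emb₂
  rw [dif_pos h]
  exact congrArg (Sum.inl ∘ A.lab) (B.inj (Classical.choose_spec h))

lemma emb₂_unlab (A B : KGraph k) (b : B.V) (hb : ∀ i, b ≠ B.lab i) :
    emb₂ A B b = Sum.inr ⟨b, hb⟩ := by
  unfold emb₂
  rw [dif_neg (fun ⟨i, hi⟩ => hb i hi.symm)]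

/-- Combine assignments on the two parts into an assignment on the glued vertex set. -/
def combine {γ : Type*} (A B : KGraph k) (t₁ : A.V → γ) (t₂ : B.V → γ) :
    GlueV A B → γ
  | Sum.inl a => t₁ a
  | Sum.inr b => t₂ b.val

lemma combine_emb₂ {γ : Type*} (A B : KGraph k) (t₁ : A.V → γ) (t₂ : B.V → γ)
    (hag : ∀ i, t₂ (B.lab i) = t₁ (A.lab i)) (b : B.V) :
    combine A B t₁ t₂ (emb₂ A B b) = t₂ b := by
  by_cases h : ∃ i, B.lab i = b
  · obtain ⟨i, hi⟩ := h
    subst hi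
    rw [emb₂_lab]
    exact (hag i).symm
  · rw [emb₂_unlab A B b (fun i hb => h ⟨i, hb.symm⟩)]
    rfl

open Classical in
/-- The splitting of a product over `B.V` into labeled and unlabeled parts. -/
lemma prod_split (B : KGraph k) [Fintype B.V] {M : Type*} [CommMonoid M] (f : B.V → M) :
    ∏ b : B.V, f b
      = (∏ i : Fin k, f (B.lab i)) * ∏ b : {b : B.V // ∀ i, b ≠ B.lab i}, f b.val := by
  classical
  have hbij : Function.Bijective
      (Sum.elim B.lab (Subtype.val : {b : B.V // ∀ i, b ≠ B.lab i} → B.V)) := by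
    constructor
    · rintro (i | b) (j | b') h
      · exact congrArg Sum.inl (B.inj h)
      · exact absurd h.symm (b'.2 i)
      · exact absurd h (b.2 j)
      · exact congrArg Sum.inr (Subtype.ext h)
    · intro b
      by_cases h : ∃ i, B.lab i = b
      · exact ⟨Sum.inl h.choose, h.choose_spec⟩
      · exact ⟨Sum.inr ⟨b, fun i hb => h ⟨i, hb.symm⟩⟩, rfl⟩
  calc ∏ b : B.V, f b
      = ∏ x : Fin k ⊕ {b : B.V // ∀ i, b ≠ B.lab i},
          f (Sum.elim B.lab Subtype.val x) :=
        (Fintype.prod_bijective _ hbij _ _ (fun _ => rfl)).symm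
    _ = _ := by rw [Fintype.prod_sum_type]; rfl

@[simp] lemma combine_inl {γ : Type*} (A B : KGraph k) (t₁ : A.V → γ) (t₂ : B.V → γ)
    (a : A.V) : combine A B t₁ t₂ (Sum.inl a) = t₁ a := rfl

@[simp] lemma combine_inr {γ : Type*} (A B : KGraph k) (t₁ : A.V → γ) (t₂ : B.V → γ)
    (b : {b : B.V // ∀ i, b ≠ B.lab i}) : combine A B t₁ t₂ (Sum.inr b) = t₂ b.val := rfl

/-- The `A`-part of the glued edge multiplicity. -/
def eA (A B : KGraph k) : GlueV A B → GlueV A B → ℕ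
  | Sum.inl a, Sum.inl a' => A.E a a'
  | _, _ => 0

@[simp] lemma eA_inl_inl (A B : KGraph k) (a a' : A.V) :
    eA A B (Sum.inl a) (Sum.inl a') = A.E a a' := rfl

@[simp] lemma eA_inr_left (A B : KGraph k) (s : {b : B.V // ∀ i, b ≠ B.lab i})
    (y : GlueV A B) : eA A B (Sum.inr s) y = 0 := by cases y <;> rfl

@[simp] lemma eA_inr_right (A B : KGraph k) (x : GlueV A B)
    (s : {b : B.V // ∀ i, b ≠ B.lab i}) : eA A B x (Sum.inr s) = 0 := by cases x <;> rfl

open Classical in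
lemma glueE_eq (A B : KGraph k) [instB : Fintype B.V] (x y : GlueV A B) :
    glueE A B x y = eA A B x y
      + ∑ b : B.V, ∑ b' : B.V,
          if emb₂ A B b = x ∧ emb₂ A B b' = y then B.E b b' else 0 := by
  have hB : instB = B.fin := Subsingleton.elim _ _
  subst hB
  cases x <;> cases y <;> rfl

lemma prod_inst' {ι M : Type*} [CommMonoid M] (i1 i2 : Fintype ι) (f g : ι → M)
    (h : ∀ x, f x = g x) :
    @Finset.prod ι M _ (@Finset.univ ι i1) f = @Finset.prod ι M _ (@Finset.univ ι i2) g := by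
  rw [Subsingleton.elim i1 i2]
  exact Finset.prod_congr rfl fun x _ => h x

lemma sum_inst' {ι M : Type*} [AddCommMonoid M] (i1 i2 : Fintype ι) (f g : ι → M)
    (h : ∀ x, f x = g x) :
    @Finset.sum ι M _ (@Finset.univ ι i1) f = @Finset.sum ι M _ (@Finset.univ ι i2) g := by
  rw [Subsingleton.elim i1 i2]
  exact Finset.sum_congr rfl fun x _ => h x

open Classical in
lemma glue_weight {q k : ℕ} (α : Fin q → ℝ) (β : Matrix (Fin q) (Fin q) ℝ)
    (hα : ∀ j, α j ≠ 0) (A B : KGraph k)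
    [instA : Fintype A.V] [instB : Fintype B.V]
    (t₁ : A.V → Fin q) (t₂ : B.V → Fin q)
    (hag : ∀ i, t₂ (B.lab i) = t₁ (A.lab i)) :
    (∏ w : GlueV A B, α (combine A B t₁ t₂ w)) *
      ∏ p : GlueV A B × GlueV A B,
        β (combine A B t₁ t₂ p.1) (combine A B t₁ t₂ p.2) ^ glueE A B p.1 p.2
    = ((∏ w : A.V, α (t₁ w)) * ∏ p : A.V × A.V, β (t₁ p.1) (t₁ p.2) ^ A.E p.1 p.2)
      * ((∏ w : B.V, α (t₂ w)) * ∏ p : B.V × B.V, β (t₂ p.1) (t₂ p.2) ^ B.E p.1 p.2)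
      / ∏ i : Fin k, α (t₁ (A.lab i)) := by
  classical
  set T := combine A B t₁ t₂ with hT
  have hTe : ∀ b, T (emb₂ A B b) = t₂ b := combine_emb₂ A B t₁ t₂ hag
  have hD : (∏ i : Fin k, α (t₁ (A.lab i))) ≠ 0 :=
    Finset.prod_ne_zero_iff.mpr fun i _ => hα _
  have hlab : (∏ i : Fin k, α (t₂ (B.lab i))) = ∏ i : Fin k, α (t₁ (A.lab i)) :=
    Finset.prod_congr rfl fun i _ => by rw [hag]
  -- vertex part
  have hsub : (∏ b : {b : B.V // ∀ i, b ≠ B.lab i}, α (t₂ b.val))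
      = (∏ w : B.V, α (t₂ w)) / ∏ i : Fin k, α (t₁ (A.lab i)) := by
    rw [eq_div_iff hD, mul_comm, ← hlab, ← prod_split B (fun b => α (t₂ b))]
  have hv : (∏ w : GlueV A B, α (T w))
      = (∏ a : A.V, α (t₁ a)) *
        ((∏ w : B.V, α (t₂ w)) / ∏ i : Fin k, α (t₁ (A.lab i))) := by
    rw [Fintype.prod_sum_type, ← hsub]
    rfl
  -- edge part
  have step1 : ∀ p : GlueV A B × GlueV A B,
      β (T p.1) (T p.2) ^ glueE A B p.1 p.2
        = β (T p.1) (T p.2) ^ eA A B p.1 p.2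
          * ∏ b : B.V, ∏ b' : B.V, β (T p.1) (T p.2)
              ^ (if emb₂ A B b = p.1 ∧ emb₂ A B b' = p.2 then B.E b b' else 0) := by
    intro p
    rw [glueE_eq, pow_add]
    congr 1
    simp only [← Finset.prod_pow_eq_pow_sum]
  have hEA : (∏ p : GlueV A B × GlueV A B, β (T p.1) (T p.2) ^ eA A B p.1 p.2)
      = ∏ p : A.V × A.V, β (t₁ p.1) (t₁ p.2) ^ A.E p.1 p.2 := by
    simp only [Fintype.prod_prod_type, Fintype.prod_sum_type, eA_inl_inl, eA_inr_left,
      eA_inr_right, pow_zero, Finset.prod_const_one, mul_one, hT, combine_inl]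
  have hEB : (∏ p : GlueV A B × GlueV A B, ∏ b : B.V, ∏ b' : B.V, β (T p.1) (T p.2)
        ^ (if emb₂ A B b = p.1 ∧ emb₂ A B b' = p.2 then B.E b b' else 0))
      = ∏ p : B.V × B.V, β (t₂ p.1) (t₂ p.2) ^ B.E p.1 p.2 := by
    rw [Fintype.prod_prod_type (f := fun p : B.V × B.V => β (t₂ p.1) (t₂ p.2) ^ B.E p.1 p.2),
      Finset.prod_comm]
    refine Finset.prod_congr rfl fun b _ => ?_
    rw [Finset.prod_comm]
    refine Finset.prod_congr rfl fun b' _ => ?_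
    rw [← hTe b, ← hTe b']
    refine (Finset.prod_eq_single (emb₂ A B b, emb₂ A B b') (fun p _ hp => ?_)
      (fun h => absurd (Finset.mem_univ _) h)).trans ?_
    · rw [if_neg, pow_zero]
      rintro ⟨h1, h2⟩
      exact hp (Prod.ext h1.symm h2.symm)
    · rw [if_pos ⟨rfl, rfl⟩]
  have he : (∏ p : GlueV A B × GlueV A B,
        β (T p.1) (T p.2) ^ glueE A B p.1 p.2)
      = (∏ p : A.V × A.V, β (t₁ p.1) (t₁ p.2) ^ A.E p.1 p.2)
        * ∏ p : B.V × B.V, β (t₂ p.1) (t₂ p.2) ^ B.E p.1 p.2 := by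
    rw [Finset.prod_congr rfl fun p _ => step1 p, Finset.prod_mul_distrib, hEA, hEB]
  rw [hv, he]
  field_simp

end KGraph

/-- For `k`-labeled graphs `G₁, G₂` (whose gluing has fully labeled intersection:
in particular no edge occurs between labeled vertices in both graphs), the value of the
partition function on the `k`-connection `G₁G₂` decomposes as a Gram-type sum over the
maps `φ : [k] → V(H)`:
`hom(G₁G₂, H(α,β)) = Σ_φ hom_φ(G₁,H) · hom_φ(G₂,H) / Π_{i∈[k]} α(φ i)`,
provided all vertex weights `α` are nonzero.  In particular the connection matrix
`C(hom(-,H(α,β)), k)` is a Gram matrix of rank at most `q^k`. -/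
theorem connection_matrix_gram_decomposition
    (q k : ℕ) (α : Fin q → ℝ) (β : Matrix (Fin q) (Fin q) ℝ)
    (hα : ∀ j, α j ≠ 0) (G₁ G₂ : KGraph k) :
    KGraph.Z q α β (G₁.glue G₂) =
      ∑ φ : Fin k → Fin q,
        KGraph.homRestrict q α β G₁ φ * KGraph.homRestrict q α β G₂ φ /
          ∏ i : Fin k, α (φ i) := by
  classical
  letI instA : Fintype G₁.V := G₁.fin
  letI instB : Fintype G₂.V := G₂.fin
  simp only [KGraph.Z, KGraph.homRestrict]
  trans (∑ t₁ : G₁.V → Fin q, ∑ t₂ : G₂.V → Fin q,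
      if ∀ i, t₂ (G₂.lab i) = t₁ (G₁.lab i) then
        ((∏ w : G₁.V, α (t₁ w)) * ∏ p : G₁.V × G₁.V, β (t₁ p.1) (t₁ p.2) ^ G₁.E p.1 p.2)
          * ((∏ w : G₂.V, α (t₂ w)) * ∏ p : G₂.V × G₂.V, β (t₂ p.1) (t₂ p.2) ^ G₂.E p.1 p.2)
          / ∏ i : Fin k, α (t₁ (G₁.lab i))
      else 0)
  · trans (∑ t : KGraph.GlueV G₁ G₂ → Fin q,
        (∏ w : KGraph.GlueV G₁ G₂, α (t w)) *
          ∏ p : KGraph.GlueV G₁ G₂ × KGraph.GlueV G₁ G₂,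
            β (t p.1) (t p.2) ^ KGraph.glueE G₁ G₂ p.1 p.2)
    · exact KGraph.sum_inst' _ _ _ _ fun t =>
        congrArg₂ (· * ·) (KGraph.prod_inst' _ _ _ _ fun _ => rfl)
          (KGraph.prod_inst' _ _ _ _ fun _ => rfl)
    trans (∑ p ∈ Finset.univ.filter
        (fun p : (G₁.V → Fin q) × (G₂.V → Fin q) => ∀ i, p.2 (G₂.lab i) = p.1 (G₁.lab i)),
        (∏ w : KGraph.GlueV G₁ G₂, α (KGraph.combine G₁ G₂ p.1 p.2 w)) *
          ∏ pr : KGraph.GlueV G₁ G₂ × KGraph.GlueV G₁ G₂,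
            β (KGraph.combine G₁ G₂ p.1 p.2 pr.1) (KGraph.combine G₁ G₂ p.1 p.2 pr.2)
              ^ KGraph.glueE G₁ G₂ pr.1 pr.2)
    · have hli : ∀ t : KGraph.GlueV G₁ G₂ → Fin q,
          KGraph.combine G₁ G₂ (fun a => t (Sum.inl a))
            (fun b => t (KGraph.emb₂ G₁ G₂ b)) = t := by
        intro t
        funext x
        cases x with
        | inl a => rfl
        | inr s =>
          show t (KGraph.emb₂ G₁ G₂ s.val) = t (Sum.inr s)
          rw [KGraph.emb₂_unlab G₁ G₂ s.val s.2]
      refine Finset.sum_nbij'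
        (fun t => (fun a => t (Sum.inl a), fun b => t (KGraph.emb₂ G₁ G₂ b)))
        (fun p => KGraph.combine G₁ G₂ p.1 p.2) ?_ ?_ ?_ ?_ ?_
      · intro t _
        refine Finset.mem_filter.mpr ⟨Finset.mem_univ _, fun i => ?_⟩
        exact congrArg t (KGraph.emb₂_lab G₁ G₂ i)
      · intro p _
        exact Finset.mem_univ _
      · intro t _
        exact hli t
      · intro p hp
        have hag := (Finset.mem_filter.mp hp).2
        refine Prod.ext rfl ?_
        funext b
        exact KGraph.combine_emb₂ G₁ G₂ p.1 p.2 hag b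
      · intro t _
        rw [hli t]
    · rw [Finset.sum_filter, Fintype.sum_prod_type]
      refine Finset.sum_congr rfl fun t₁ _ => Finset.sum_congr rfl fun t₂ _ => ?_
      split_ifs with h
      · exact KGraph.glue_weight α β hα G₁ G₂ t₁ t₂ h
      · rfl
  · symm
    have step : ∀ φ : Fin k → Fin q,
        (∑ t : G₁.V → Fin q, if ∀ i, t (G₁.lab i) = φ i then
            (∏ w : G₁.V, α (t w)) * ∏ p : G₁.V × G₁.V, β (t p.1) (t p.2) ^ G₁.E p.1 p.2
          else 0)
          * (∑ t : G₂.V → Fin q, if ∀ i, t (G₂.lab i) = φ i then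
              (∏ w : G₂.V, α (t w)) * ∏ p : G₂.V × G₂.V, β (t p.1) (t p.2) ^ G₂.E p.1 p.2
            else 0)
          / ∏ i : Fin k, α (φ i)
        = ∑ t₁ : G₁.V → Fin q, ∑ t₂ : G₂.V → Fin q,
            (if ∀ i, t₁ (G₁.lab i) = φ i then
              (∏ w : G₁.V, α (t₁ w)) * ∏ p : G₁.V × G₁.V, β (t₁ p.1) (t₁ p.2) ^ G₁.E p.1 p.2
            else 0)
              * (if ∀ i, t₂ (G₂.lab i) = φ i then
                (∏ w : G₂.V, α (t₂ w)) * ∏ p : G₂.V × G₂.V, β (t₂ p.1) (t₂ p.2) ^ G₂.E p.1 p.2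
              else 0)
              / ∏ i : Fin k, α (φ i) := by
      intro φ
      rw [Finset.sum_mul_sum, Finset.sum_div]
      refine Finset.sum_congr rfl fun t₁ _ => ?_
      rw [Finset.sum_div]
    refine Eq.trans (Finset.sum_congr rfl fun φ _ => step φ) ?_
    refine Eq.trans Finset.sum_comm ?_
    refine Eq.trans (Finset.sum_congr rfl fun t₁ _ => Finset.sum_comm) ?_
    refine Finset.sum_congr rfl fun t₁ _ => Finset.sum_congr rfl fun t₂ _ => ?_
    refine Eq.trans (Finset.sum_eq_single (fun i => t₁ (G₁.lab i)) ?_ ?_) ?_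
    · intro φ _ hφ
      rw [if_neg, zero_mul, zero_div]
      intro hcon
      exact hφ (funext fun i => (hcon i).symm)
    · intro h
      exact absurd (Finset.mem_univ _) h
    · rw [if_pos (fun i => rfl)]
      split_ifs with h
      · rfl
      · rw [mul_zero, zero_div]
end
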